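/- Let data matrix V ∈ ℝ^{F×N} with columns v_n, and define p_n = Σ_f v_{f,n}, q_n = p_n². Let [M̂₄]_{ijlm} = (1/N)Σ_n v_{i,n}v_{j,n}v_{l,n}v_{m,n} − [T̂]_{ijlm}, where [T̂]_{ijlm} = (1/N²)(Σ_n v_{i,n}v_{j,n})(Σ_n v_{l,n}v_{m,n}) + (1/N²)(Σ_n v_{i,n}v_{l,n})(Σ_n v_{j,n}v_{m,n}) + (1/N²)(Σ_n v_{i,n}v_{m,n})(Σ_n v_{j,n}v_{l,n}). Then the matrix M̂₂ with entries [M̂₂]_{ij} = Σ_{l,m} [M̂₄]_{ijlm} satisfies M̂₂ = (1/N) V Diag(q) Vᵀ − ((Σ_n q_n)/N²) V Vᵀ − (2/N²) V p pᵀ Vᵀ, where p = (p_1,…,p_N)ᵀ, q = (q_1,…,q_N)ᵀ. -/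

import Mathlib

open Matrix

/-- Efficient computation of the empirical second moment:
M̂₂ = (1/N) V Diag(q) Vᵀ − ((Σ_n q_n)/N²) V Vᵀ − (2/N²) (Vp)(Vp)ᵀ. -/
theorem M2hat_formula {F N : ℕ} (V : Matrix (Fin F) (Fin N) ℝ)
    (p : Fin N → ℝ) (hp : ∀ n, p n = ∑ f, V f n)
    (q : Fin N → ℝ) (hq : ∀ n, q n = (p n) ^ 2)
    (That : Fin F → Fin F → Fin F → Fin F → ℝ)
    (hThat : ∀ i j l m, That i j l m =
      (∑ n, V i n * V j n) * (∑ n, V l n * V m n) / (N : ℝ) ^ 2 +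
      (∑ n, V i n * V l n) * (∑ n, V j n * V m n) / (N : ℝ) ^ 2 +
      (∑ n, V i n * V m n) * (∑ n, V j n * V l n) / (N : ℝ) ^ 2)
    (M4hat : Fin F → Fin F → Fin F → Fin F → ℝ)
    (hM4hat : ∀ i j l m, M4hat i j l m =
      (∑ n, V i n * V j n * V l n * V m n) / (N : ℝ) - That i j l m)
    (M2hat : Matrix (Fin F) (Fin F) ℝ)
    (hM2hat : ∀ i j, M2hat i j = ∑ l, ∑ m, M4hat i j l m) :
    M2hat = ((N : ℝ)⁻¹) • (V * Matrix.diagonal q * Vᵀ)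
      - ((∑ n, q n) / (N : ℝ) ^ 2) • (V * Vᵀ)
      - (2 / (N : ℝ) ^ 2) • Matrix.vecMulVec (V.mulVec p) (V.mulVec p) := by
  ext i j
  have hsep : ∀ (A B : Fin F → ℝ), (∑ l, ∑ m, A l * B m) = (∑ l, A l) * (∑ m, B m) := by
    intro A B
    simp_rw [← Finset.mul_sum]
    rw [← Finset.sum_mul]
  have hrow : ∀ a : Fin F, (∑ m, ∑ n, V a n * V m n) = ∑ n, V a n * p n := by
    intro a
    rw [Finset.sum_comm]
    exact Finset.sum_congr rfl fun n _ => by rw [← Finset.mul_sum, hp]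
  have h1 : (∑ l, ∑ m, ∑ n, V i n * V j n * V l n * V m n)
      = ∑ n, V i n * V j n * q n := by
    rw [show (∑ l, ∑ m, ∑ n, V i n * V j n * V l n * V m n)
        = ∑ l, ∑ n, ∑ m, V i n * V j n * V l n * V m n from
      Finset.sum_congr rfl fun l _ => Finset.sum_comm]
    rw [Finset.sum_comm]
    refine Finset.sum_congr rfl fun n _ => ?_
    have := hsep (fun l => V i n * V j n * V l n) (fun m => V m n)
    rw [this, hq, hp]
    rw [show (∑ l, V i n * V j n * V l n) = V i n * V j n * ∑ l, V l n by
      rw [Finset.mul_sum]]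
    ring
  have hq2 : (∑ l, ∑ m, ∑ n, V l n * V m n) = ∑ n, q n := by
    rw [show (∑ l, ∑ m, ∑ n, V l n * V m n)
        = ∑ l, ∑ n, ∑ m, V l n * V m n from
      Finset.sum_congr rfl fun l _ => Finset.sum_comm]
    rw [Finset.sum_comm]
    refine Finset.sum_congr rfl fun n _ => ?_
    rw [hsep (fun l => V l n) (fun m => V m n), hq, hp]
    ring
  have h3 : (∑ l, ∑ m, (∑ n, V i n * V j n) * (∑ n, V l n * V m n))
      = (∑ n, V i n * V j n) * (∑ n, q n) := by
    simp_rw [← Finset.mul_sum]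
    rw [hq2]
  have h2 : ∀ a b : Fin F, (∑ l, ∑ m, (∑ n, V a n * V l n) * (∑ n, V b n * V m n))
      = (∑ n, V a n * p n) * (∑ n, V b n * p n) := by
    intro a b
    rw [hsep (fun l => ∑ n, V a n * V l n) (fun m => ∑ n, V b n * V m n),
      hrow a, hrow b]
  have h4 : (∑ l, ∑ m, (∑ n, V i n * V m n) * (∑ n, V j n * V l n))
      = (∑ n, V i n * p n) * (∑ n, V j n * p n) := by
    rw [Finset.sum_comm,
      hsep (fun m => ∑ n, V i n * V m n) (fun l => ∑ n, V j n * V l n),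
      hrow i, hrow j]
  simp only [hM2hat, hM4hat, hThat, Matrix.sub_apply, Matrix.smul_apply, smul_eq_mul,
    Matrix.mul_apply, vecMulVec_apply, transpose_apply, mulVec, dotProduct,
    diagonal_apply]
  simp only [Finset.sum_sub_distrib, Finset.sum_add_distrib, Finset.sum_div,
    ← Finset.sum_div, h1]
  rw [h3, h2 i j, h4]
  have hd : (∑ x, (∑ x_1, V i x_1 * if x_1 = x then q x_1 else 0) * V j x)
      = ∑ n, V i n * V j n * q n := by
    refine Finset.sum_congr rfl fun x _ => ?_
    simp only [mul_ite, mul_zero, Finset.sum_ite_eq', Finset.mem_univ, if_true]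
    ring
  rw [hd]
  ring
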